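/- For every positive integer m, Σ_{n=1}^{∞} 1/n^{2m} = (−1)^{m+1} · π^{2m} · c_{2m}, where c_{2m} is the coefficient of X^{2m} in the formal power series G; equivalently, the residue at X = 0 of the meromorphic function 1/(X^{2m}(e^{2X} − 1)), which equals c_{2m}, satisfies ζ(2m) = (−1)^{m+1} π^{2m} · res_{X=0} 1/(X^{2m}(e^{2X} − 1)). -/

import Mathlib

open PowerSeries
open scoped Real

/-- Lemma on ζ(2m): For every positive integer m,
ζ(2m) = Σ_{n≥1} 1/n^{2m} = (−1)^{m+1} π^{2m} c_{2m}, where c_{2m} is the coefficient of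
X^{2m} in the formal power series G with G·H = X, H = Σ_{n≥1} 2ⁿXⁿ/n! being the power
series of e^{2X} − 1; c_{2m} is the residue at X = 0 of 1/(X^{2m}(e^{2X} − 1)). -/
theorem stmt10 (m : ℕ) (hm : 1 ≤ m) (G : PowerSeries ℚ)
    (hG : G * PowerSeries.mk
        (fun n => if n = 0 then (0 : ℚ) else 2 ^ n / (n.factorial : ℚ)) =
      PowerSeries.X) :
    ∑' n : ℕ, 1 / ((n : ℝ) + 1) ^ (2 * m) =
      (-1 : ℝ) ^ (m + 1) * Real.pi ^ (2 * m) *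
        ((PowerSeries.coeff (2 * m) G : ℚ) : ℝ) := by
  -- Step 1: identify the coefficient of G via Bernoulli numbers.
  have hcoeff : PowerSeries.coeff (2*m) G
      = 2 ^ (2*m) / 2 * bernoulli (2*m) / (2*m).factorial := by
    have hH : (PowerSeries.mk (fun n => if n = 0 then (0:ℚ) else 2 ^ n / (n.factorial : ℚ)))
        = PowerSeries.rescale 2 (PowerSeries.exp ℚ - 1) := by
      ext n
      rw [coeff_rescale]
      simp [coeff_exp, coeff_one]
      rcases n with _|n <;> simp [div_eq_mul_inv, mul_comm]
    have key : ((1/2 : ℚ) • PowerSeries.rescale 2 (bernoulliPowerSeries ℚ)) *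
        PowerSeries.mk (fun n => if n = 0 then (0:ℚ) else 2 ^ n / (n.factorial : ℚ)) = X := by
      rw [hH, smul_mul_assoc, ← map_mul, bernoulliPowerSeries_mul_exp_sub_one]
      ext n
      simp [coeff_rescale, coeff_X]
    have hGeq : G = (1/2 : ℚ) • PowerSeries.rescale 2 (bernoulliPowerSeries ℚ) := by
      have h0 : (G - (1/2 : ℚ) • PowerSeries.rescale 2 (bernoulliPowerSeries ℚ)) *
          PowerSeries.mk (fun n => if n = 0 then (0:ℚ) else 2 ^ n / (n.factorial : ℚ)) = 0 := by
        rw [sub_mul, hG, key, sub_self]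
      rcases mul_eq_zero.mp h0 with h | h
      · exact sub_eq_zero.mp h
      · exfalso
        have := congrArg (PowerSeries.coeff 1) h
        simp at this
    rw [hGeq]
    simp [coeff_rescale, bernoulliPowerSeries, coeff_mk]
    ring
  -- Step 2: the zeta value formula.
  have h := hasSum_zeta_nat (k := m) (by omega)
  have h2 : HasSum (fun n : ℕ => 1 / ((n : ℝ) + 1) ^ (2 * m))
      ((-1 : ℝ) ^ (m + 1) * (2 : ℝ) ^ (2 * m - 1) * π ^ (2 * m) *
        bernoulli (2 * m) / ((2 * m).factorial : ℝ)) := by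
    rw [← hasSum_nat_add_iff' (f := fun n : ℕ => 1 / (n : ℝ) ^ (2 * m)) 1] at h
    simp only [Finset.range_one, Finset.sum_singleton, Nat.cast_zero,
      zero_pow (show 2*m ≠ 0 by omega), div_zero, sub_zero] at h
    convert h using 2
    push_cast; rfl
    push_cast; ring
  rw [h2.tsum_eq, hcoeff]
  have h2m : (2:ℝ) ^ (2*m-1) = 2 ^ (2*m) / 2 := by
    rw [eq_div_iff (two_ne_zero' ℝ), ← pow_succ]
    congr 1; omega
  push_cast [h2m]
  ring
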